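/- (Non-identifiability under natural multiplicities.) If the multiplicities satisfy Σ_{j=1}^k λ_j = n, then the log-likelihood is invariant under rescaling of the weight vector: l(c·w, θ, σ²) = l(w, θ, σ²) for every c > 0, every w ∈ (0,∞)^k, θ ∈ ℝ and σ² ≥ 0. Consequently l has no unique maximizer in w in this case. -/

import Mathlib

open MeasureTheory Real Set Filter Topology

/-- Standard normal density. -/
noncomputable def stdPhi (z : ℝ) : ℝ := (Real.sqrt (2 * Real.pi))⁻¹ * Real.exp (-z ^ 2 / 2)

/-- `η_i = √(u_i² + σ²)`. -/
noncomputable def etaFn (u sigma2 : ℝ) : ℝ := Real.sqrt (u ^ 2 + sigma2)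

/-- The cell probability `H`: Gaussian `N(θ, η²)` integral over the annulus
`{y : b ≤ |y| < b'}`, with (possibly infinite) extended-real thresholds. -/
noncomputable def cellH (b b' : EReal) (u θ sigma2 : ℝ) : ℝ :=
  ∫ x in {x : ℝ | b ≤ ((|x| : ℝ) : EReal) ∧ ((|x| : ℝ) : EReal) < b'},
    (etaFn u sigma2)⁻¹ * stdPhi ((x - θ) / etaFn u sigma2)

/-- The log-likelihood `l(w, θ, σ²)` of Dear–Begg selection models. For study `i`
the thresholds on the outcome scale are `b i 0 = 0 ≤ b i 1 ≤ … ≤ b i k = ∞`. -/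
noncomputable def loglik {n k : ℕ} (y u : Fin n → ℝ) (lam : Fin k → ℝ)
    (b : Fin n → ℕ → EReal) (w : Fin k → ℝ) (θ sigma2 : ℝ) : ℝ :=
  -((n : ℝ) / 2) * Real.log (2 * Real.pi)
    + ∑ j, lam j * Real.log (w j)
    - ∑ i, Real.log (etaFn (u i) sigma2)
    - (1 / 2) * ∑ i, ((y i - θ) / etaFn (u i) sigma2) ^ 2
    - ∑ i, Real.log (∑ j : Fin k, w j * cellH (b i (j : ℕ)) (b i ((j : ℕ) + 1)) (u i) θ sigma2)

lemma etaFn_pos {u sigma2 : ℝ} (hu : 0 < u) (hs : 0 ≤ sigma2) : 0 < etaFn u sigma2 :=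
  Real.sqrt_pos.2 (by positivity)

lemma integrable_fn {u sigma2 : ℝ} (hu : 0 < u) (hs : 0 ≤ sigma2) (θ : ℝ) :
    Integrable (fun x : ℝ => (etaFn u sigma2)⁻¹ * stdPhi ((x - θ) / etaFn u sigma2)) := by
  have hη := etaFn_pos hu hs
  have h : (fun x : ℝ => (etaFn u sigma2)⁻¹ * stdPhi ((x - θ) / etaFn u sigma2))
      = fun x : ℝ => ((etaFn u sigma2)⁻¹ * (Real.sqrt (2 * Real.pi))⁻¹) *
        Real.exp (-(1 / (2 * (etaFn u sigma2) ^ 2)) * (x - θ) ^ 2) := by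
    funext x
    have : -((x - θ) / etaFn u sigma2) ^ 2 / 2 = -(1 / (2 * (etaFn u sigma2) ^ 2)) * (x - θ) ^ 2 := by
      field_simp
    simp [stdPhi, this]; ring
  rw [h]
  exact ((integrable_exp_neg_mul_sq (by positivity)).comp_sub_right θ).const_mul _

lemma fn_pos {u sigma2 : ℝ} (hu : 0 < u) (hs : 0 ≤ sigma2) (θ x : ℝ) :
    0 < (etaFn u sigma2)⁻¹ * stdPhi ((x - θ) / etaFn u sigma2) := by
  have hη := etaFn_pos hu hs
  have : 0 < stdPhi ((x - θ) / etaFn u sigma2) := by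
    unfold stdPhi; positivity
  positivity

lemma cellH_nonneg (b b' : EReal) {u sigma2 : ℝ} (hu : 0 < u) (hs : 0 ≤ sigma2) (θ : ℝ) :
    0 ≤ cellH b b' u θ sigma2 := by
  apply setIntegral_nonneg_of_ae_restrict
  filter_upwards with x
  simpa using (fn_pos hu hs θ x).le

lemma cellH_pos {b : EReal} (hb0 : 0 ≤ b) (hbt : b ≠ ⊤) {u sigma2 : ℝ}
    (hu : 0 < u) (hs : 0 ≤ sigma2) (θ : ℝ) :
    0 < cellH b ⊤ u θ sigma2 := by
  have hη := etaFn_pos hu hs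
  have hbb : b ≠ ⊥ := ne_bot_of_le_ne_bot (by simp) hb0
  set r := b.toReal with hr
  have hbr : b = (r : EReal) := (EReal.coe_toReal hbt hbb).symm
  have hset : {x : ℝ | b ≤ ((|x| : ℝ) : EReal) ∧ ((|x| : ℝ) : EReal) < ⊤}
      = {x : ℝ | r ≤ |x|} := by
    ext x
    simp [hbr, EReal.coe_lt_top, EReal.coe_le_coe_iff]
  unfold cellH
  rw [hset]
  rw [setIntegral_pos_iff_support_of_nonneg_ae]
  · have hsub : Ici (abs r) ⊆ Function.support
        (fun x : ℝ => (etaFn u sigma2)⁻¹ * stdPhi ((x - θ) / etaFn u sigma2))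
        ∩ {x : ℝ | r ≤ |x|} := by
      intro x hx
      simp only [mem_Ici] at hx
      constructor
      · exact (fn_pos hu hs θ x).ne'
      · have : r ≤ x := le_trans (le_abs_self r) hx
        exact this.trans (le_abs_self x)
    calc (0 : ENNReal) < volume (Ici (abs r)) := by simp
      _ ≤ _ := measure_mono hsub
  · filter_upwards with x
    simpa using (fn_pos hu hs θ x).le
  · exact (integrable_fn hu hs θ).integrableOn

/-- non-identifiability under natural multiplicities: if
`Σ_j λ_j = n` then the log-likelihood is invariant under rescaling of the weight
vector, and consequently no point of the domain is the unique maximizer in `w`: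
every `(w, θ, σ²)` has a distinct weight vector with the same likelihood value. -/
theorem loglik_nonidentifiable_of_sum_lam_eq_n
    {n k : ℕ} (hn : 1 ≤ n) (hk : 1 ≤ k)
    (y u : Fin n → ℝ) (hu : ∀ i, 0 < u i)
    (lam : Fin k → ℝ) (hlam : ∀ j, 0 < lam j)
    (hsum : (∑ j, lam j) = (n : ℝ))
    (b : Fin n → ℕ → EReal)
    (hb0 : ∀ i, b i 0 = 0) (hbk : ∀ i, b i k = ⊤)
    (hbmono : ∀ i, Monotone (b i))
    (hblt : ∀ i, ∀ j, j < k → b i j ≠ ⊤) :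
    (∀ (c : ℝ), 0 < c → ∀ (w : Fin k → ℝ), (∀ j, 0 < w j) →
      ∀ (θ sigma2 : ℝ), 0 ≤ sigma2 →
        loglik y u lam b (fun j => c * w j) θ sigma2 = loglik y u lam b w θ sigma2) ∧
    (∀ (w : Fin k → ℝ), (∀ j, 0 < w j) → ∀ (θ sigma2 : ℝ), 0 ≤ sigma2 →
      ∃ w' : Fin k → ℝ, w' ≠ w ∧ (∀ j, 0 < w' j) ∧
        loglik y u lam b w' θ sigma2 = loglik y u lam b w θ sigma2) := by
  have h1 : ∀ (c : ℝ), 0 < c → ∀ (w : Fin k → ℝ), (∀ j, 0 < w j) →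
      ∀ (θ sigma2 : ℝ), 0 ≤ sigma2 →
        loglik y u lam b (fun j => c * w j) θ sigma2 = loglik y u lam b w θ sigma2 := by
    intro c hc w hw θ sigma2 hs
    have hA : ∀ i, 0 < ∑ j : Fin k, w j * cellH (b i (j : ℕ)) (b i ((j : ℕ) + 1)) (u i) θ sigma2 := by
      intro i
      apply Finset.sum_pos'
      · intro j _
        exact mul_nonneg (hw j).le (cellH_nonneg _ _ (hu i) hs θ)
      · refine ⟨⟨k - 1, by omega⟩, Finset.mem_univ _, ?_⟩
        have hk1 : (k - 1) + 1 = k := by omega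
        have hbt : b i ((⟨k - 1, by omega⟩ : Fin k) : ℕ) ≠ ⊤ := hblt i (k - 1) (by omega)
        have hge : (0 : EReal) ≤ b i (k - 1) := (hb0 i) ▸ hbmono i (Nat.zero_le _)
        have : 0 < cellH (b i (k - 1)) (b i ((k - 1) + 1)) (u i) θ sigma2 := by
          rw [hk1, hbk i]
          exact cellH_pos hge (hblt i (k - 1) (by omega)) (hu i) hs θ
        exact mul_pos (hw _) this
    -- term 2
    have hterm2 : (∑ j, lam j * Real.log (c * w j))
        = (n : ℝ) * Real.log c + ∑ j, lam j * Real.log (w j) := by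
      have : ∀ j : Fin k, lam j * Real.log (c * w j)
          = lam j * Real.log c + lam j * Real.log (w j) := by
        intro j; rw [Real.log_mul hc.ne' (hw j).ne']; ring
      rw [Finset.sum_congr rfl fun j _ => this j, Finset.sum_add_distrib,
        ← Finset.sum_mul, hsum]
    -- term 5
    have hterm5 : (∑ i, Real.log (∑ j : Fin k,
          (c * w j) * cellH (b i (j : ℕ)) (b i ((j : ℕ) + 1)) (u i) θ sigma2))
        = (n : ℝ) * Real.log c + ∑ i, Real.log (∑ j : Fin k,
          w j * cellH (b i (j : ℕ)) (b i ((j : ℕ) + 1)) (u i) θ sigma2) := by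
      have : ∀ i : Fin n, Real.log (∑ j : Fin k,
            (c * w j) * cellH (b i (j : ℕ)) (b i ((j : ℕ) + 1)) (u i) θ sigma2)
          = Real.log c + Real.log (∑ j : Fin k,
            w j * cellH (b i (j : ℕ)) (b i ((j : ℕ) + 1)) (u i) θ sigma2) := by
        intro i
        have hfac : (∑ j : Fin k,
            (c * w j) * cellH (b i (j : ℕ)) (b i ((j : ℕ) + 1)) (u i) θ sigma2)
          = c * ∑ j : Fin k, w j * cellH (b i (j : ℕ)) (b i ((j : ℕ) + 1)) (u i) θ sigma2 := by
          rw [Finset.mul_sum]; exact Finset.sum_congr rfl fun j _ => by ring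
        rw [hfac, Real.log_mul hc.ne' (hA i).ne']
      rw [Finset.sum_congr rfl fun i _ => this i, Finset.sum_add_distrib,
        Finset.sum_const, Finset.card_univ, Fintype.card_fin, nsmul_eq_mul]
    unfold loglik
    rw [hterm2, hterm5]
    ring
  refine ⟨h1, ?_⟩
  intro w hw θ sigma2 hs
  refine ⟨fun j => 2 * w j, ?_, fun j => by simpa using mul_pos two_pos (hw j), h1 2 (by norm_num) w hw θ sigma2 hs⟩
  intro heq
  have h0 := congrFun heq ⟨0, hk⟩
  have := hw ⟨0, hk⟩
  linarith
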